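/- Let H_prop = Σ_{t=1}^T H_prop^t with H_prop^t = (1/2)(I ⊗ |t⟩⟨t| + I ⊗ |t-1⟩⟨t-1| − U_t ⊗ |t⟩⟨t-1| − U_t† ⊗ |t-1⟩⟨t|). Then the kernel of H_prop is exactly the set of vectors of the form Σ_{t=0}^T (U_t⋯U_1 |χ⟩) ⊗ |t⟩ for |χ⟩ ∈ V, i.e., ker(H_prop) = R · (V ⊗ |unif⟩-span) where R = Σ_t (U_t⋯U_1) ⊗ |t⟩⟨t| and the span is of Σ_{t=0}^T |t⟩. -/

import Mathlib

open Matrix Kronecker Finset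

private lemma kmv {N T : ℕ} (A : Matrix (Fin N) (Fin N) ℂ) (u v : Fin (T+1) → ℂ)
    (ψ : Fin N × Fin (T + 1) → ℂ) (i : Fin N) (j : Fin (T+1)) :
    ((A ⊗ₖ vecMulVec u (star v)) *ᵥ ψ) (i, j)
      = u j * (A *ᵥ (fun k => ∑ l, star (v l) * ψ (k, l))) i := by
  simp only [mulVec, dotProduct, Fintype.sum_prod_type, kroneckerMap_apply,
    vecMulVec_apply, Pi.star_apply, Finset.mul_sum]
  refine Finset.sum_congr rfl fun k _ => ?_
  refine Finset.sum_congr rfl fun l _ => ?_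
  ring

private lemma sum_mulVec' {N M : Type*} [Fintype M] {s : Finset ℕ}
    (f : ℕ → Matrix N M ℂ) (ψ : M → ℂ) :
    (∑ t ∈ s, f t) *ᵥ ψ = ∑ t ∈ s, f t *ᵥ ψ := by
  induction s using Finset.cons_induction with
  | empty => simp [Matrix.zero_mulVec]
  | cons a s ha ih => rw [Finset.sum_cons, Finset.sum_cons, Matrix.add_mulVec, ih]

private noncomputable def cvec {N T : ℕ} (e : ℕ → Fin (T+1) → ℂ) (ψ : Fin N × Fin (T + 1) → ℂ)
    (t : ℕ) : Fin N → ℂ := fun k => ∑ l, star (e t l) * ψ (k, l)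

private lemma hkey {N T : ℕ} (U : ℕ → Matrix (Fin N) (Fin N) ℂ)
    (e : ℕ → Fin (T+1) → ℂ) (ψ : Fin N × Fin (T + 1) → ℂ) (i : Fin N) (j : Fin (T+1)) :
    ((∑ t ∈ Finset.Icc 1 T, (1/2 : ℂ) •
        ((1 : Matrix (Fin N) (Fin N) ℂ) ⊗ₖ vecMulVec (e t) (star (e t))
          + (1 : Matrix (Fin N) (Fin N) ℂ) ⊗ₖ vecMulVec (e (t-1)) (star (e (t-1)))
          - U t ⊗ₖ vecMulVec (e t) (star (e (t-1)))
          - (U t)ᴴ ⊗ₖ vecMulVec (e (t-1)) (star (e t)))) *ᵥ ψ) (i, j)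
      = ∑ t ∈ Finset.Icc 1 T, (1/2 : ℂ) *
          (e t j * (cvec e ψ t i - (U t *ᵥ cvec e ψ (t-1)) i)
            + e (t-1) j * (cvec e ψ (t-1) i - ((U t)ᴴ *ᵥ cvec e ψ t) i)) := by
  rw [sum_mulVec', Finset.sum_apply]
  refine Finset.sum_congr rfl fun t _ => ?_
  rw [Matrix.smul_mulVec, Pi.smul_apply, Matrix.sub_mulVec, Matrix.sub_mulVec,
    Matrix.add_mulVec, Pi.sub_apply, Pi.sub_apply, Pi.add_apply,
    kmv, kmv, kmv, kmv]
  simp only [Matrix.one_mulVec, smul_eq_mul]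
  show _ * (e t j * cvec e ψ t i + e (t-1) j * cvec e ψ (t-1) i
      - e t j * (U t *ᵥ cvec e ψ (t-1)) i - e (t-1) j * ((U t)ᴴ *ᵥ cvec e ψ t) i) = _
  ring

private lemma hrel {N T : ℕ} (U : ℕ → Matrix (Fin N) (Fin N) ℂ)
    (e : ℕ → Fin (T+1) → ℂ) (ψ : Fin N × Fin (T + 1) → ℂ)
    (he : ∀ i ≤ T, ∀ j ≤ T, star (e i) ⬝ᵥ e j = if i = j then 1 else 0)
    (hz : ∀ i j, ∑ t ∈ Finset.Icc 1 T, (1/2 : ℂ) *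
          (e t j * (cvec e ψ t i - (U t *ᵥ cvec e ψ (t-1)) i)
            + e (t-1) j * (cvec e ψ (t-1) i - ((U t)ᴴ *ᵥ cvec e ψ t) i)) = 0)
    (s : ℕ) (hs : s ≤ T) (i : Fin N) :
    (if 1 ≤ s then (1/2 : ℂ) * (cvec e ψ s i - (U s *ᵥ cvec e ψ (s-1)) i) else 0)
      + (if s + 1 ≤ T then (1/2 : ℂ) * (cvec e ψ s i - ((U (s+1))ᴴ *ᵥ cvec e ψ (s+1)) i) else 0)
      = 0 := by
  have h0 : ∑ j, star (e s j) * (∑ t ∈ Finset.Icc 1 T, (1/2 : ℂ) *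
          (e t j * (cvec e ψ t i - (U t *ᵥ cvec e ψ (t-1)) i)
            + e (t-1) j * (cvec e ψ (t-1) i - ((U t)ᴴ *ᵥ cvec e ψ t) i))) = 0 := by
    exact Finset.sum_eq_zero fun j _ => by rw [hz i j, mul_zero]
  have step : ∀ t ∈ Finset.Icc 1 T,
      (∑ j, star (e s j) * ((1/2 : ℂ) *
          (e t j * (cvec e ψ t i - (U t *ᵥ cvec e ψ (t-1)) i)
            + e (t-1) j * (cvec e ψ (t-1) i - ((U t)ᴴ *ᵥ cvec e ψ t) i))))
      = (if t = s then (1/2 : ℂ) * (cvec e ψ t i - (U t *ᵥ cvec e ψ (t-1)) i) else 0)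
        + (if t = s + 1 then (1/2 : ℂ) * (cvec e ψ (t-1) i - ((U t)ᴴ *ᵥ cvec e ψ t) i) else 0) := by
    intro t ht
    obtain ⟨ht1, ht2⟩ := Finset.mem_Icc.mp ht
    have d1 := he s hs t ht2
    have d2 := he s hs (t-1) (le_trans (Nat.sub_le t 1) ht2)
    simp only [dotProduct, Pi.star_apply] at d1 d2
    set X := cvec e ψ t i - (U t *ᵥ cvec e ψ (t-1)) i with hX
    set Y := cvec e ψ (t-1) i - ((U t)ᴴ *ᵥ cvec e ψ t) i with hY
    have expand : ∑ j, star (e s j) * ((1/2 : ℂ) * (e t j * X + e (t-1) j * Y))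
        = (1/2 : ℂ) * ((∑ j, star (e s j) * e t j) * X + (∑ j, star (e s j) * e (t-1) j) * Y) := by
      rw [Finset.sum_mul, Finset.sum_mul, ← Finset.sum_add_distrib, Finset.mul_sum]
      exact Finset.sum_congr rfl fun j _ => by ring
    rw [expand, d1, d2]
    split_ifs <;> (first | ring1 | (exfalso; omega))
  have key : ∑ j, star (e s j) * (∑ t ∈ Finset.Icc 1 T, (1/2 : ℂ) *
          (e t j * (cvec e ψ t i - (U t *ᵥ cvec e ψ (t-1)) i)
            + e (t-1) j * (cvec e ψ (t-1) i - ((U t)ᴴ *ᵥ cvec e ψ t) i)))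
      = (if 1 ≤ s then (1/2 : ℂ) * (cvec e ψ s i - (U s *ᵥ cvec e ψ (s-1)) i) else 0)
        + (if s + 1 ≤ T then (1/2 : ℂ) * (cvec e ψ s i - ((U (s+1))ᴴ *ᵥ cvec e ψ (s+1)) i) else 0) := by
    simp_rw [Finset.mul_sum]
    rw [Finset.sum_comm, Finset.sum_congr rfl step, Finset.sum_add_distrib,
      Finset.sum_ite_eq', Finset.sum_ite_eq']
    simp only [Finset.mem_Icc, Nat.add_sub_cancel]
    congr 1
    · by_cases h1s : 1 ≤ s
      · simp [h1s, hs]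
      · simp [h1s]
    · by_cases hsT1 : s + 1 ≤ T
      · simp [hsT1, Nat.le_add_left 1 s]
      · simp [hsT1]
  rw [← key]
  exact h0

private lemma complete {T : ℕ} (e : ℕ → Fin (T+1) → ℂ)
    (he : ∀ i ≤ T, ∀ j ≤ T, star (e i) ⬝ᵥ e j = if i = j then 1 else 0)
    (l j : Fin (T+1)) :
    ∑ t : Fin (T+1), star (e (t:ℕ) l) * e (t:ℕ) j = if l = j then 1 else 0 := by
  classical
  set M : Matrix (Fin (T+1)) (Fin (T+1)) ℂ := Matrix.of fun s j => e (s:ℕ) j with hM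
  have h1 : M * Mᴴ = 1 := by
    ext s t
    have h := he (t:ℕ) t.is_le (s:ℕ) s.is_le
    simp only [dotProduct, Pi.star_apply] at h
    rw [Matrix.mul_apply]
    simp only [conjTranspose_apply, Matrix.one_apply, Matrix.of_apply, hM]
    rw [Finset.sum_congr rfl fun u _ => mul_comm (e (s:ℕ) u) (star (e (t:ℕ) u)), h]
    by_cases hst : s = t
    · simp [hst]
    · rw [if_neg (by simpa [Fin.val_inj] using Ne.symm hst), if_neg hst]
  have h2 : Mᴴ * M = 1 := mul_eq_one_comm.mp h1
  have h3 := congrFun (congrFun h2 l) j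
  simpa [Matrix.mul_apply, conjTranspose_apply, hM, Matrix.one_apply] using h3

private lemma decomp {N T : ℕ} (e : ℕ → Fin (T+1) → ℂ) (ψ : Fin N × Fin (T + 1) → ℂ)
    (he : ∀ i ≤ T, ∀ j ≤ T, star (e i) ⬝ᵥ e j = if i = j then 1 else 0) :
    ψ = ∑ t ∈ Finset.range (T+1),
      fun p : Fin N × Fin (T + 1) => cvec e ψ t p.1 * e t p.2 := by
  funext p
  rw [Finset.sum_apply]
  rw [← Fin.sum_univ_eq_sum_range (fun t => cvec e ψ t p.1 * e t p.2) (T+1)]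
  unfold cvec
  have swap : ∑ t : Fin (T+1), (∑ l, star (e (t:ℕ) l) * ψ (p.1, l)) * e (t:ℕ) p.2
      = ∑ l, ψ (p.1, l) * ∑ t : Fin (T+1), star (e (t:ℕ) l) * e (t:ℕ) p.2 := by
    simp_rw [Finset.sum_mul, Finset.mul_sum]
    rw [Finset.sum_comm]
    exact Finset.sum_congr rfl fun l _ => Finset.sum_congr rfl fun t _ => by ring
  rw [swap]
  simp only [complete e he]
  simp [Finset.sum_ite_eq']

private lemma cvec_hist {N T : ℕ} (e : ℕ → Fin (T+1) → ℂ)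
    (he : ∀ i ≤ T, ∀ j ≤ T, star (e i) ⬝ᵥ e j = if i = j then 1 else 0)
    (W : ℕ → Matrix (Fin N) (Fin N) ℂ) (χ : Fin N → ℂ) (t : ℕ) (ht : t ≤ T) :
    cvec e (∑ s ∈ Finset.range (T+1),
      fun p : Fin N × Fin (T + 1) => (W s *ᵥ χ) p.1 * e s p.2) t = W t *ᵥ χ := by
  funext k
  unfold cvec
  simp only [Finset.sum_apply]
  have swap : ∑ l, star (e t l) * ∑ s ∈ Finset.range (T+1), (W s *ᵥ χ) k * e s l
      = ∑ s ∈ Finset.range (T+1), (W s *ᵥ χ) k * ∑ l, star (e t l) * e s l := by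
    simp_rw [Finset.mul_sum]
    rw [Finset.sum_comm]
    exact Finset.sum_congr rfl fun s _ => Finset.sum_congr rfl fun l _ => by ring
  rw [swap]
  have step : ∀ s ∈ Finset.range (T+1),
      (W s *ᵥ χ) k * ∑ l, star (e t l) * e s l = if t = s then (W s *ᵥ χ) k else 0 := by
    intro s hs
    have h := he t ht s (Nat.lt_succ_iff.mp (Finset.mem_range.mp hs))
    simp only [dotProduct, Pi.star_apply] at h
    rw [h]
    split_ifs <;> simp
  rw [Finset.sum_congr rfl step, Finset.sum_ite_eq,
    if_pos (Finset.mem_range.mpr (Nat.lt_succ_iff.mpr ht))]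

/-- The kernel of `H_prop = Σ_{t=1}^T H_prop^t` consists exactly of the history
states `Σ_{t=0}^T (U_t⋯U_1 |χ⟩) ⊗ |t⟩`, `|χ⟩ ∈ V`.  Here `W t = U_t⋯U_1` and
`e 0, …, e T` is an orthonormal basis of the clock space `ℂ^{T+1}`. -/
theorem stmt5 (N T : ℕ) (U W : ℕ → Matrix (Fin N) (Fin N) ℂ)
    (hU : ∀ t, U t ∈ Matrix.unitaryGroup (Fin N) ℂ)
    (hW0 : W 0 = 1) (hW : ∀ t, W (t + 1) = U (t + 1) * W t)
    (e : ℕ → Fin (T + 1) → ℂ)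
    (he : ∀ i ≤ T, ∀ j ≤ T, star (e i) ⬝ᵥ e j = if i = j then 1 else 0)
    (ψ : Fin N × Fin (T + 1) → ℂ) :
    (∑ t ∈ Finset.Icc 1 T, (1/2 : ℂ) •
        ((1 : Matrix (Fin N) (Fin N) ℂ) ⊗ₖ vecMulVec (e t) (star (e t))
          + (1 : Matrix (Fin N) (Fin N) ℂ) ⊗ₖ vecMulVec (e (t-1)) (star (e (t-1)))
          - U t ⊗ₖ vecMulVec (e t) (star (e (t-1)))
          - (U t)ᴴ ⊗ₖ vecMulVec (e (t-1)) (star (e t)))) *ᵥ ψ = 0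
    ↔ ∃ χ : Fin N → ℂ,
        ψ = ∑ t ∈ Finset.range (T + 1),
          fun p : Fin N × Fin (T + 1) => (W t *ᵥ χ) p.1 * e t p.2 := by
  have hUl : ∀ t, (U t)ᴴ * U t = 1 := fun t => by
    have := (Matrix.mem_unitaryGroup_iff').mp (hU t)
    rwa [Matrix.star_eq_conjTranspose] at this
  have hUr : ∀ t, U t * (U t)ᴴ = 1 := fun t => by
    have := (Matrix.mem_unitaryGroup_iff).mp (hU t)
    rwa [Matrix.star_eq_conjTranspose] at this
  constructor
  · intro hz
    have hz' : ∀ i j, ∑ t ∈ Finset.Icc 1 T, (1/2 : ℂ) *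
          (e t j * (cvec e ψ t i - (U t *ᵥ cvec e ψ (t-1)) i)
            + e (t-1) j * (cvec e ψ (t-1) i - ((U t)ᴴ *ᵥ cvec e ψ t) i)) = 0 := by
      intro i j
      rw [← hkey U e ψ i j, hz]
      rfl
    have rel := hrel U e ψ he hz'
    have main : ∀ s, s ≤ T → cvec e ψ s = W s *ᵥ cvec e ψ 0 := by
      intro s
      induction s using Nat.strong_induction_on with
      | _ s ih =>
        intro hsT
        cases s with
        | zero => rw [hW0, Matrix.one_mulVec]
        | succ s =>
          have hs : s ≤ T := Nat.le_of_succ_le hsT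
          have hcs : cvec e ψ s = W s *ᵥ cvec e ψ 0 := ih s (Nat.lt_succ_self s) hs
          have h1 : cvec e ψ s = (U (s+1))ᴴ *ᵥ cvec e ψ (s+1) := by
            funext i
            have h := rel s hs i
            rw [if_pos hsT] at h
            rcases Nat.eq_zero_or_pos s with rfl | hpos
            · rw [if_neg (by omega), zero_add] at h
              have h2 := mul_eq_zero.mp h
              have h3 : cvec e ψ 0 i - ((U (0+1))ᴴ *ᵥ cvec e ψ (0+1)) i = 0 := by
                rcases h2 with h2 | h2
                · norm_num at h2
                · exact h2
              exact sub_eq_zero.mp h3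
            · have hds : cvec e ψ s i - (U s *ᵥ cvec e ψ (s-1)) i = 0 := by
                have hps : cvec e ψ (s-1) = W (s-1) *ᵥ cvec e ψ 0 :=
                  ih (s-1) (by omega) (by omega)
                have hWs : W s = U s * W (s-1) := by
                  have h4 := hW (s-1)
                  rwa [show s - 1 + 1 = s from by omega] at h4
                rw [hcs, hps, Matrix.mulVec_mulVec, ← hWs, sub_self]
              rw [if_pos (show 1 ≤ s from hpos), hds, mul_zero, zero_add] at h
              have h2 := mul_eq_zero.mp h
              have h3 : cvec e ψ s i - ((U (s+1))ᴴ *ᵥ cvec e ψ (s+1)) i = 0 := by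
                rcases h2 with h2 | h2
                · norm_num at h2
                · exact h2
              exact sub_eq_zero.mp h3
          calc cvec e ψ (s+1) = (U (s+1) * (U (s+1))ᴴ) *ᵥ cvec e ψ (s+1) := by
                rw [hUr, Matrix.one_mulVec]
            _ = U (s+1) *ᵥ ((U (s+1))ᴴ *ᵥ cvec e ψ (s+1)) := (Matrix.mulVec_mulVec _ _ _).symm
            _ = U (s+1) *ᵥ cvec e ψ s := by rw [← h1]
            _ = (U (s+1) * W s) *ᵥ cvec e ψ 0 := by rw [hcs, Matrix.mulVec_mulVec]
            _ = W (s+1) *ᵥ cvec e ψ 0 := by rw [← hW s]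
    refine ⟨cvec e ψ 0, ?_⟩
    conv_lhs => rw [decomp e ψ he]
    refine Finset.sum_congr rfl fun t ht => ?_
    rw [main t (Nat.lt_succ_iff.mp (Finset.mem_range.mp ht))]
  · rintro ⟨χ, rfl⟩
    funext p
    obtain ⟨i, j⟩ := p
    rw [Pi.zero_apply, hkey U e _ i j]
    refine Finset.sum_eq_zero fun t ht => ?_
    obtain ⟨ht1, ht2⟩ := Finset.mem_Icc.mp ht
    rw [cvec_hist e he W χ t ht2, cvec_hist e he W χ (t-1) (le_trans (Nat.sub_le t 1) ht2)]
    have hWt : W t = U t * W (t-1) := by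
      have h4 := hW (t-1)
      rwa [show t - 1 + 1 = t from by omega] at h4
    have h1 : U t *ᵥ (W (t-1) *ᵥ χ) = W t *ᵥ χ := by
      rw [Matrix.mulVec_mulVec, ← hWt]
    have h2 : (U t)ᴴ *ᵥ (W t *ᵥ χ) = W (t-1) *ᵥ χ := by
      rw [Matrix.mulVec_mulVec, hWt, ← Matrix.mul_assoc, hUl, Matrix.one_mul]
    rw [h1, h2]
    ring
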